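/- arXiv:2305.01037 — 2 statements merged into one kernel-verified Lean document; each statement's English description precedes it below -/
import Mathlib

section
/- Let p > 1, η ∈ (1, p), c ∈ ℝ, and define f(x) = x^{p−1} ln x + c x^{η−1} for x ≥ 1, with F(x) = ∫₁ˣ f(s) ds. Then for every ϑ > p and every M ≥ 1 there exists x ≥ M such that ϑ F(x) > f(x)·x. In other words, there are no ϑ > p and M ≥ 1 with ϑ F(x) ≤ f(x)x for all x ≥ M: the Ambrosetti–Rabinowitz condition fails for f. -/
open Real Filter

/-- For the model nonlinearity `f(x) = x^{p-1} log x + c x^{η-1}` (for `x ≥ 1`,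
with `1 < η < p`) and its primitive `F(x) = ∫₁ˣ f(s) ds`, the
Ambrosetti–Rabinowitz condition fails: for every `ϑ > p` and `M ≥ 1` there is
`x ≥ M` with `ϑ F(x) > f(x)·x`. -/
theorem stmt_5
    (p η c : ℝ) (hp : 1 < p) (hη : 1 < η) (hηp : η < p)
    (f F : ℝ → ℝ)
    (hf : ∀ x : ℝ, 1 ≤ x → f x = x ^ (p - 1) * Real.log x + c * x ^ (η - 1))
    (hF : ∀ x : ℝ, F x = ∫ s in (1:ℝ)..x, f s) :
    ∀ ϑ : ℝ, p < ϑ → ∀ M : ℝ, 1 ≤ M → ∃ x : ℝ, M ≤ x ∧ f x * x < ϑ * F x := by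
  have hp0 : (0:ℝ) < p := by linarith
  have hη0 : (0:ℝ) < η := by linarith
  set g : ℝ → ℝ := fun x => x ^ p * Real.log x / p - x ^ p / p ^ 2 + c * x ^ η / η with hg
  -- explicit antiderivative
  have hderiv : ∀ x : ℝ, 1 ≤ x → HasDerivAt g (f x) x := by
    intro x hx
    have hx0 : (0:ℝ) < x := by linarith
    have h1 : HasDerivAt (fun y : ℝ => y ^ p) (p * x ^ (p - 1)) x := by
      simpa using Real.hasDerivAt_rpow_const (p := p) (Or.inl hx0.ne')
    have h2 : HasDerivAt (fun y : ℝ => y ^ η) (η * x ^ (η - 1)) x := by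
      simpa using Real.hasDerivAt_rpow_const (p := η) (Or.inl hx0.ne')
    have hlog : HasDerivAt Real.log x⁻¹ x := Real.hasDerivAt_log hx0.ne'
    have H : HasDerivAt g
        (((p * x ^ (p - 1)) * Real.log x + x ^ p * x⁻¹) / p - (p * x ^ (p - 1)) / p ^ 2
          + c * (η * x ^ (η - 1)) / η) x := by
      exact (((h1.mul hlog).div_const p).sub (h1.div_const (p ^ 2))).add
        ((h2.const_mul c).div_const η)
    have hxp : x ^ p * x⁻¹ = x ^ (p - 1) := by
      rw [Real.rpow_sub hx0, Real.rpow_one, div_eq_mul_inv]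
    rw [hf x hx]
    convert H using 1
    rw [hxp]
    field_simp
    ring
  -- value of F for x ≥ 1
  have hFval : ∀ x : ℝ, 1 ≤ x → F x = g x - g 1 := by
    intro x hx
    have hcont : ContinuousOn f (Set.uIcc 1 x) := by
      have hsub : Set.uIcc (1:ℝ) x ⊆ {y : ℝ | 1 ≤ y} := by
        rw [Set.uIcc_of_le hx]
        intro y hy
        exact hy.1
      have : ContinuousOn (fun y : ℝ => y ^ (p - 1) * Real.log y + c * y ^ (η - 1))
          {y : ℝ | 1 ≤ y} := by
        apply ContinuousOn.add
        · apply ContinuousOn.mul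
          · exact continuousOn_id.rpow_const fun y hy => Or.inl (by
              have : (1:ℝ) ≤ y := hy
              positivity)
          · exact Real.continuousOn_log.mono (by
              intro y hy
              simp only [Set.mem_compl_iff, Set.mem_singleton_iff]
              have : (1:ℝ) ≤ y := hy
              intro h; rw [h] at this; linarith)
        · exact (continuousOn_id.rpow_const fun y hy => Or.inl (by
              have : (1:ℝ) ≤ y := hy
              positivity)).const_smul c
      exact (this.mono hsub).congr fun y hy => hf y (hsub hy)
    rw [hF x, intervalIntegral.integral_eq_sub_of_hasDerivAt
      (fun y hy => hderiv y (by rw [Set.uIcc_of_le hx] at hy; exact hy.1))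
      (hcont.intervalIntegrable)]
  intro ϑ hϑ M hM
  have hA : 0 < ϑ / p - 1 := by
    rw [sub_pos, lt_div_iff₀ hp0]; linarith
  set K : ℝ := ϑ / p ^ 2 - c * ϑ / η with hK
  set D : ℝ := ϑ / p ^ 2 + |c * (ϑ / η - 1)| with hD
  -- key identity
  have key : ∀ x : ℝ, 1 ≤ x → ϑ * F x - f x * x =
      (ϑ / p - 1) * (x ^ p * Real.log x) - (ϑ / p ^ 2) * x ^ p
        + c * (ϑ / η - 1) * x ^ η + K := by
    intro x hx
    have hx0 : (0:ℝ) < x := by linarith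
    have hxp : x ^ (p - 1) * x = x ^ p := by
      rw [Real.rpow_sub hx0, Real.rpow_one]; field_simp
    have hxη : x ^ (η - 1) * x = x ^ η := by
      rw [Real.rpow_sub hx0, Real.rpow_one]; field_simp
    have e1 : (x ^ (p - 1) * Real.log x + c * x ^ (η - 1)) * x
        = x ^ p * Real.log x + c * x ^ η := by
      calc (x ^ (p - 1) * Real.log x + c * x ^ (η - 1)) * x
          = x ^ (p - 1) * x * Real.log x + c * (x ^ (η - 1) * x) := by ring
        _ = x ^ p * Real.log x + c * x ^ η := by rw [hxp, hxη]
    rw [hFval x hx, hf x hx, e1, hg, hK]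
    simp only [Real.one_rpow, Real.log_one]
    field_simp
    ring
  -- lower bound
  have lb : ∀ x : ℝ, 1 ≤ x → x ^ p * ((ϑ / p - 1) * Real.log x - D) + K ≤ ϑ * F x - f x * x := by
    intro x hx
    have hx0 : (0:ℝ) < x := by linarith
    have h1 : x ^ η ≤ x ^ p := Real.rpow_le_rpow_of_exponent_le hx hηp.le
    have h2 : -(|c * (ϑ / η - 1)| * x ^ p) ≤ c * (ϑ / η - 1) * x ^ η := by
      have h3 : -(|c * (ϑ / η - 1)| * x ^ η) ≤ c * (ϑ / η - 1) * x ^ η := by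
        have := neg_abs_le (c * (ϑ / η - 1))
        nlinarith [Real.rpow_nonneg hx0.le η]
      have h4 : -(|c * (ϑ / η - 1)| * x ^ p) ≤ -(|c * (ϑ / η - 1)| * x ^ η) := by
        nlinarith [abs_nonneg (c * (ϑ / η - 1))]
      linarith
    rw [key x hx, hD]
    nlinarith
  -- tendsto
  have htend : Tendsto (fun x : ℝ => x ^ p * ((ϑ / p - 1) * Real.log x - D) + K) atTop atTop := by
    apply tendsto_atTop_add_const_right
    apply Filter.Tendsto.atTop_mul_atTop₀ (tendsto_rpow_atTop hp0)
    exact tendsto_atTop_add_const_right _ _ (Real.tendsto_log_atTop.const_mul_atTop hA)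
  have hev : ∀ᶠ x : ℝ in atTop, M ≤ x ∧ (1:ℝ) ≤ x ∧
      0 < x ^ p * ((ϑ / p - 1) * Real.log x - D) + K := by
    filter_upwards [eventually_ge_atTop M, eventually_ge_atTop (1:ℝ),
      htend.eventually_gt_atTop 0] with x h1 h2 h3
    exact ⟨h1, h2, h3⟩
  obtain ⟨x, hxM, hx1, hxpos⟩ := hev.exists
  exact ⟨x, hxM, by linarith [lb x hx1]⟩
end

section
/- Let (Ω, Σ, μ) be a finite measure space, p ≥ 1, C ≥ 0, and let F : Ω × [0,∞) → ℝ be a Carathéodory function (measurable in the first variable, continuous in the second) with F(z,x) ≥ −C for all x ≥ 0 and μ-a.e. z ∈ Ω. Assume F(z,x)/x^{p} → +∞ as x → +∞ uniformly for a.e. z ∈ Ω, i.e. for every K > 0 there is M > 0 such that F(z,x) ≥ K x^{p} for all x ≥ M and a.e. z ∈ Ω. Let u_n : Ω → [0,∞) be measurable functions, let t_n → +∞ be positive reals, and suppose u_n(z)/t_n → v(z) for μ-a.e. z ∈ Ω, where v is measurable with μ({z : v(z) > 0}) > 0. Then (1/t_n^{p}) ∫_Ω F(z, u_n(z)) dμ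 → +∞ as n → ∞. -/
open MeasureTheory Filter Topology

/-- Fatou-lemma divergence estimate (equations (48)–(49) of the paper): if the
Carathéodory function `F(z,x)` is bounded below by `-C` on `[0,∞)`, grows
superlinearly of order `p` uniformly in `z`, and `u_n/t_n → v` a.e. with `v > 0`
on a set of positive measure and `t_n → +∞`, then
`t_n^{-p} ∫_Ω F(z,u_n(z)) dμ → +∞`. -/
theorem stmt_7
    {Ω : Type*} [MeasurableSpace Ω] (μ : Measure Ω) [IsFiniteMeasure μ]
    (p C : ℝ) (hp : 1 ≤ p) (hC : 0 ≤ C)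
    (F : Ω → ℝ → ℝ)
    (hFmeas : ∀ x : ℝ, Measurable fun z => F z x)
    (hFcont : ∀ᵐ z ∂μ, ContinuousOn (F z) (Set.Ici 0))
    (hFlb : ∀ᵐ z ∂μ, ∀ x : ℝ, 0 ≤ x → -C ≤ F z x)
    (hFsuper : ∀ K : ℝ, 0 < K → ∃ M : ℝ, 0 < M ∧
      ∀ᵐ z ∂μ, ∀ x : ℝ, M ≤ x → K * x ^ p ≤ F z x)
    (u : ℕ → Ω → ℝ) (humeas : ∀ n, Measurable (u n)) (hupos : ∀ n z, 0 ≤ u n z)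
    (hint : ∀ n, Integrable (fun z => F z (u n z)) μ)
    (t : ℕ → ℝ) (htpos : ∀ n, 0 < t n) (htlim : Tendsto t atTop atTop)
    (v : Ω → ℝ) (hvmeas : Measurable v)
    (hconv : ∀ᵐ z ∂μ, Tendsto (fun n => u n z / t n) atTop (𝓝 (v z)))
    (hvpos : 0 < μ {z | 0 < v z}) :
    Tendsto (fun n => (1 / (t n) ^ p) * ∫ z, F z (u n z) ∂μ) atTop atTop := by
  rw [tendsto_atTop]
  -- Step 1: find ε > 0 with μ {v ≥ ε} > 0
  obtain ⟨ε, hε, hSpos⟩ : ∃ ε : ℝ, 0 < ε ∧ 0 < μ {z | ε ≤ v z} := by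
    by_contra h
    push_neg at h
    have h0 : μ {z | 0 < v z} = 0 := by
      have hsub : {z | 0 < v z} ⊆ ⋃ k : ℕ, {z | 1 / ((k : ℝ) + 1) ≤ v z} := by
        intro z hz
        have hz' : (0:ℝ) < v z := hz
        obtain ⟨k, hk⟩ := exists_nat_one_div_lt hz'
        exact Set.mem_iUnion.2 ⟨k, le_of_lt hk⟩
      refine measure_mono_null hsub ?_
      rw [measure_iUnion_null_iff]
      intro k
      exact le_zero_iff.1 (h (1 / ((k : ℝ) + 1)) (by positivity))
    rw [h0] at hvpos
    exact lt_irrefl _ hvpos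
  set S : Set Ω := {z | ε ≤ v z} with hS
  have hSm : MeasurableSet S := hvmeas measurableSet_Ici
  set A : ℕ → Set Ω := fun m => {z | ε / 2 * t m ≤ u m z} with hA
  have hAm : ∀ m, MeasurableSet (A m) := fun m => (humeas m) measurableSet_Ici
  set E : ℕ → Set Ω := fun n => S ∩ ⋂ m, ⋂ _ : n ≤ m, A m with hE
  have hEm : ∀ n, MeasurableSet (E n) := fun n =>
    hSm.inter (MeasurableSet.iInter fun m => MeasurableSet.iInter fun _ => hAm m)
  have hEmono : Monotone E := by
    intro a b hab z hz
    refine ⟨hz.1, ?_⟩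
    have := hz.2
    simp only [Set.mem_iInter] at this ⊢
    intro m hm
    exact this m (hab.trans hm)
  -- μ (⋃ E) = μ S
  have hUle : μ (⋃ n, E n) ≤ μ S :=
    measure_mono (Set.iUnion_subset fun n => Set.inter_subset_left)
  have hUge : μ S ≤ μ (⋃ n, E n) := by
    apply measure_mono_ae
    filter_upwards [hconv] with z hz hzS
    have hlt : ε / 2 < v z := lt_of_lt_of_le (by linarith) hzS
    have hev : ∀ᶠ m in atTop, ε / 2 < u m z / t m :=
      hz.eventually (eventually_gt_nhds hlt)
    obtain ⟨n, hn⟩ := hev.exists_forall_of_atTop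
    refine Set.mem_iUnion.2 ⟨n, hzS, ?_⟩
    simp only [Set.mem_iInter]
    intro m hm
    have := hn m hm
    have := (lt_div_iff₀ (htpos m)).1 this
    exact le_of_lt this
  have hUeq : μ (⋃ n, E n) = μ S := le_antisymm hUle hUge
  have htendE : Tendsto (fun n => μ (E n)) atTop (𝓝 (μ S)) := by
    have := tendsto_measure_iUnion_atTop (μ := μ) hEmono
    rwa [hUeq] at this
  have hShalf : μ S / 2 < μ S :=
    ENNReal.half_lt_self (ne_of_gt hSpos) (measure_ne_top μ S)
  obtain ⟨n₀, hn₀⟩ := (htendE.eventually (eventually_gt_nhds hShalf)).exists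
  set T : Set Ω := E n₀ with hT
  have hTm : MeasurableSet T := hEm n₀
  set d : ℝ := (μ T).toReal with hd
  have hdpos : 0 < d :=
    ENNReal.toReal_pos (ne_of_gt (lt_trans (ENNReal.half_pos (ne_of_gt hSpos)) hn₀)) (measure_ne_top μ T)
  set cΩ : ℝ := (μ Set.univ).toReal with hcΩ
  have hcΩ0 : 0 ≤ cΩ := ENNReal.toReal_nonneg
  intro L
  -- choose K
  set D : ℝ := (ε / 2) ^ p * d with hD
  have hDpos : 0 < D := by
    apply mul_pos _ hdpos
    exact Real.rpow_pos_of_pos (by linarith) p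
  set K : ℝ := max 1 ((L + C * cΩ + 1) / D) with hK
  have hKpos : 0 < K := lt_of_lt_of_le one_pos (le_max_left _ _)
  have hKge : L + C * cΩ + 1 ≤ K * D := by
    have h1 : (L + C * cΩ + 1) / D * D = L + C * cΩ + 1 := div_mul_cancel₀ _ (ne_of_gt hDpos)
    calc L + C * cΩ + 1 = (L + C * cΩ + 1) / D * D := h1.symm
      _ ≤ K * D := mul_le_mul_of_nonneg_right (le_max_right _ _) (le_of_lt hDpos)
  obtain ⟨M, hMpos, hFK⟩ := hFsuper K hKpos
  filter_upwards [eventually_ge_atTop n₀, htlim.eventually_ge_atTop (max 1 (2 * M / ε))]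
    with n hn htn
  have ht1 : (1 : ℝ) ≤ t n := le_trans (le_max_left _ _) htn
  have htM : M ≤ ε / 2 * t n := by
    have h2 : 2 * M / ε ≤ t n := le_trans (le_max_right _ _) htn
    have : ε / 2 * (2 * M / ε) = M := by field_simp
    nlinarith
  have htp1 : (1 : ℝ) ≤ t n ^ p := by
    have := Real.rpow_le_rpow zero_le_one ht1 (by linarith : (0:ℝ) ≤ p)
    rwa [Real.one_rpow] at this
  have htppos : (0 : ℝ) < t n ^ p := lt_of_lt_of_le one_pos htp1
  -- lower bound on T
  have hTsub : T ⊆ A n := by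
    intro z hz
    have := hz.2
    simp only [Set.mem_iInter] at this
    exact this n hn
  have hI1 : d * (K * (ε / 2 * t n) ^ p) ≤ ∫ z in T, F z (u n z) ∂μ := by
    have hmono := setIntegral_mono_ae_restrict
      (f := fun _ => K * (ε / 2 * t n) ^ p) (g := fun z => F z (u n z))
      (integrableOn_const (measure_lt_top μ T).ne) ((hint n).integrableOn)
      (by
        filter_upwards [ae_restrict_of_ae hFK, ae_restrict_mem hTm] with z hz hzT
        have h1 : ε / 2 * t n ≤ u n z := hTsub hzT
        have h2 : M ≤ u n z := le_trans htM h1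
        have h3 : K * (u n z) ^ p ≤ F z (u n z) := hz (u n z) h2
        have h4 : (ε / 2 * t n) ^ p ≤ (u n z) ^ p :=
          Real.rpow_le_rpow (by positivity) h1 (by linarith)
        calc K * (ε / 2 * t n) ^ p ≤ K * (u n z) ^ p :=
              mul_le_mul_of_nonneg_left h4 (le_of_lt hKpos)
          _ ≤ F z (u n z) := h3)
    rwa [setIntegral_const, smul_eq_mul] at hmono
  have hI2 : (μ Tᶜ).toReal * (-C) ≤ ∫ z in Tᶜ, F z (u n z) ∂μ := by
    have hmono := setIntegral_mono_ae_restrict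
      (f := fun _ => -C) (g := fun z => F z (u n z))
      (integrableOn_const (measure_lt_top μ Tᶜ).ne) ((hint n).integrableOn)
      (by
        filter_upwards [ae_restrict_of_ae hFlb] with z hz
        exact hz (u n z) (hupos n z))
    rwa [setIntegral_const, smul_eq_mul] at hmono
  have hsplit : (∫ z in T, F z (u n z) ∂μ) + ∫ z in Tᶜ, F z (u n z) ∂μ
      = ∫ z, F z (u n z) ∂μ := integral_add_compl hTm (hint n)
  have hTc : (μ Tᶜ).toReal ≤ cΩ :=
    ENNReal.toReal_mono (measure_ne_top μ _) (measure_mono (Set.subset_univ _))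
  have hTc0 : 0 ≤ (μ Tᶜ).toReal := ENNReal.toReal_nonneg
  have hmulp : (ε / 2 * t n) ^ p = (ε / 2) ^ p * t n ^ p :=
    Real.mul_rpow (by linarith) (le_of_lt (htpos n))
  have hItot : K * D * t n ^ p - C * cΩ ≤ ∫ z, F z (u n z) ∂μ := by
    rw [← hsplit]
    have h6 : (μ Tᶜ).toReal * (-C) ≥ -(C * cΩ) := by nlinarith
    have h7 : d * (K * (ε / 2 * t n) ^ p) = K * D * t n ^ p := by
      rw [hmulp, hD]; ring
    nlinarith [hI1, hI2]
  -- conclude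
  have h8 : 1 / t n ^ p * (K * D * t n ^ p - C * cΩ) ≤ 1 / t n ^ p * ∫ z, F z (u n z) ∂μ :=
    mul_le_mul_of_nonneg_left hItot (by positivity)
  have h9 : 1 / t n ^ p * (K * D * t n ^ p - C * cΩ) = K * D - C * cΩ / t n ^ p := by
    field_simp
  have h10 : C * cΩ / t n ^ p ≤ C * cΩ := div_le_self (by positivity) htp1
  have : L ≤ 1 / t n ^ p * (K * D * t n ^ p - C * cΩ) := by rw [h9]; linarith
  linarith
end
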